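/- Let η, ψ : Ω → ℂ be holomorphic functions on an open set Ω ⊆ ℂ with η nonvanishing. Define u by e^{u/2} = η·η̄·(1 + ψψ̄) (i.e., u = 2 log(|η|²(1+|ψ|²))) and Q = −η²·ψ_{,z}. Then u and Q satisfy the Gauss–Mainardi–Codazzi system u_{,zz̄} − 2|Q|²e^{−u} = 0 and Q_{,z̄} = 0. -/

import Mathlib

open Complex

noncomputable section

/-- Wirtinger derivative `∂_z f = (f_x − i f_y)/2` of `f : ℂ → ℂ`. -/
def wdz (f : ℂ → ℂ) (z : ℂ) : ℂ :=
  (2 : ℂ)⁻¹ * (fderiv ℝ f z 1 - I * fderiv ℝ f z I)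

/-- Wirtinger derivative `∂_z̄ f = (f_x + i f_y)/2` of `f : ℂ → ℂ`. -/
def wdzbar (f : ℂ → ℂ) (z : ℂ) : ℂ :=
  (2 : ℂ)⁻¹ * (fderiv ℝ f z 1 + I * fderiv ℝ f z I)

lemma wdz_congr {f g : ℂ → ℂ} {z : ℂ} (h : f =ᶠ[nhds z] g) : wdz f z = wdz g z := by
  unfold wdz; rw [h.fderiv_eq]

lemma wdzbar_congr {f g : ℂ → ℂ} {z : ℂ} (h : f =ᶠ[nhds z] g) : wdzbar f z = wdzbar g z := by
  unfold wdzbar; rw [h.fderiv_eq]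

lemma fderiv_holo {f : ℂ → ℂ} {z : ℂ} (hf : DifferentiableAt ℂ f z) (v : ℂ) :
    fderiv ℝ f z v = deriv f z * v := by
  rw [hf.fderiv_restrictScalars ℝ]
  have : fderiv ℂ f z v = v • fderiv ℂ f z 1 := by
    rw [← ContinuousLinearMap.map_smul, smul_eq_mul, mul_one]
  simpa [smul_eq_mul, mul_comm] using this

lemma wdz_holo {f : ℂ → ℂ} {z : ℂ} (hf : DifferentiableAt ℂ f z) : wdz f z = deriv f z := by
  unfold wdz
  rw [fderiv_holo hf, fderiv_holo hf]
  ring_nf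
  simp [Complex.I_sq]
  ring

lemma wdzbar_holo {f : ℂ → ℂ} {z : ℂ} (hf : DifferentiableAt ℂ f z) : wdzbar f z = 0 := by
  unfold wdzbar
  rw [fderiv_holo hf, fderiv_holo hf]
  ring_nf
  simp [Complex.I_sq]

lemma fderiv_conj_holo {f : ℂ → ℂ} {z : ℂ} (hf : DifferentiableAt ℂ f z) (v : ℂ) :
    fderiv ℝ (fun w => (starRingEnd ℂ) (f w)) z v = (starRingEnd ℂ) (deriv f z * v) := by
  have : (fun w => (starRingEnd ℂ) (f w)) = (Complex.conjCLE : ℂ → ℂ) ∘ f := rfl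
  rw [this, ContinuousLinearEquiv.comp_fderiv]
  simp only [ContinuousLinearMap.coe_comp', Function.comp_apply,
    ContinuousLinearEquiv.coe_coe, fderiv_holo hf]
  rfl

lemma wdz_conj_holo {f : ℂ → ℂ} {z : ℂ} (hf : DifferentiableAt ℂ f z) :
    wdz (fun w => (starRingEnd ℂ) (f w)) z = 0 := by
  unfold wdz
  rw [fderiv_conj_holo hf, fderiv_conj_holo hf]
  simp [map_mul, Complex.conj_I]
  ring_nf
  rw [Complex.I_sq]; ring

lemma wdzbar_conj_holo {f : ℂ → ℂ} {z : ℂ} (hf : DifferentiableAt ℂ f z) :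
    wdzbar (fun w => (starRingEnd ℂ) (f w)) z = (starRingEnd ℂ) (deriv f z) := by
  unfold wdzbar
  rw [fderiv_conj_holo hf, fderiv_conj_holo hf]
  simp [map_mul, Complex.conj_I]
  ring_nf
  rw [Complex.I_sq]; ring

lemma wdz_comp {φ f : ℂ → ℂ} {z : ℂ} (hφ : DifferentiableAt ℂ φ (f z))
    (hf : DifferentiableAt ℝ f z) :
    wdz (fun w => φ (f w)) z = deriv φ (f z) * wdz f z := by
  have h : fderiv ℝ (φ ∘ f) z = (fderiv ℝ φ (f z)).comp (fderiv ℝ f z) :=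
    fderiv_comp z (hφ.restrictScalars ℝ) hf
  unfold wdz
  rw [show (fun w => φ (f w)) = φ ∘ f from rfl, h]
  simp only [ContinuousLinearMap.coe_comp', Function.comp_apply]
  rw [fderiv_holo hφ, fderiv_holo hφ]
  ring

lemma wdzbar_comp {φ f : ℂ → ℂ} {z : ℂ} (hφ : DifferentiableAt ℂ φ (f z))
    (hf : DifferentiableAt ℝ f z) :
    wdzbar (fun w => φ (f w)) z = deriv φ (f z) * wdzbar f z := by
  have h : fderiv ℝ (φ ∘ f) z = (fderiv ℝ φ (f z)).comp (fderiv ℝ f z) :=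
    fderiv_comp z (hφ.restrictScalars ℝ) hf
  unfold wdzbar
  rw [show (fun w => φ (f w)) = φ ∘ f from rfl, h]
  simp only [ContinuousLinearMap.coe_comp', Function.comp_apply]
  rw [fderiv_holo hφ, fderiv_holo hφ]
  ring

lemma wdz_mul {f g : ℂ → ℂ} {z : ℂ} (hf : DifferentiableAt ℝ f z)
    (hg : DifferentiableAt ℝ g z) :
    wdz (fun w => f w * g w) z = f z * wdz g z + g z * wdz f z := by
  unfold wdz
  rw [fderiv_fun_mul hf hg]
  simp only [ContinuousLinearMap.add_apply, ContinuousLinearMap.smul_apply, smul_eq_mul]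
  ring

lemma wdzbar_mul {f g : ℂ → ℂ} {z : ℂ} (hf : DifferentiableAt ℝ f z)
    (hg : DifferentiableAt ℝ g z) :
    wdzbar (fun w => f w * g w) z = f z * wdzbar g z + g z * wdzbar f z := by
  unfold wdzbar
  rw [fderiv_fun_mul hf hg]
  simp only [ContinuousLinearMap.add_apply, ContinuousLinearMap.smul_apply, smul_eq_mul]
  ring

lemma wdz_add {f g : ℂ → ℂ} {z : ℂ} (hf : DifferentiableAt ℝ f z)
    (hg : DifferentiableAt ℝ g z) :
    wdz (fun w => f w + g w) z = wdz f z + wdz g z := by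
  unfold wdz
  rw [fderiv_fun_add hf hg]
  simp only [ContinuousLinearMap.add_apply]
  ring

lemma wdzbar_add {f g : ℂ → ℂ} {z : ℂ} (hf : DifferentiableAt ℝ f z)
    (hg : DifferentiableAt ℝ g z) :
    wdzbar (fun w => f w + g w) z = wdzbar f z + wdzbar g z := by
  unfold wdzbar
  rw [fderiv_fun_add hf hg]
  simp only [ContinuousLinearMap.add_apply]
  ring

lemma wdz_const_mul {f : ℂ → ℂ} {z c : ℂ} (hf : DifferentiableAt ℝ f z) :
    wdz (fun w => c * f w) z = c * wdz f z := by
  unfold wdz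
  rw [fderiv_const_mul hf]
  simp only [ContinuousLinearMap.smul_apply, smul_eq_mul]
  ring

lemma wdzbar_const_mul {f : ℂ → ℂ} {z c : ℂ} (hf : DifferentiableAt ℝ f z) :
    wdzbar (fun w => c * f w) z = c * wdzbar f z := by
  unfold wdzbar
  rw [fderiv_const_mul hf]
  simp only [ContinuousLinearMap.smul_apply, smul_eq_mul]
  ring

lemma wdz_const (c z : ℂ) : wdz (fun _ => c) z = 0 := by
  unfold wdz; simp

lemma wdzbar_const (c z : ℂ) : wdzbar (fun _ => c) z = 0 := by
  unfold wdzbar; simp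

lemma diffAt_conj {f : ℂ → ℂ} {z : ℂ} (hf : DifferentiableAt ℝ f z) :
    DifferentiableAt ℝ (fun w => (starRingEnd ℂ) (f w)) z :=
  (Complex.conjCLE.differentiable.differentiableAt).comp z hf

lemma diffAt_inv' {g : ℂ → ℂ} {z : ℂ} (hg : DifferentiableAt ℝ g z) (h0 : g z ≠ 0) :
    DifferentiableAt ℝ (fun w => (g w)⁻¹) z :=
  (((differentiableAt_inv h0 : DifferentiableAt ℂ Inv.inv (g z))).restrictScalars ℝ).comp z hg

lemma ofReal_sq_abs' (v : ℂ) : ((‖v‖ ^ 2 : ℝ) : ℂ) = v * (starRingEnd ℂ) v := by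
  rw [Complex.sq_norm]; exact (Complex.mul_conj v).symm

theorem gauss_mainardi_codazzi_of_weierstrass_data
    (Ω : Set ℂ) (hΩ : IsOpen Ω)
    (η ψ : ℂ → ℂ) (hη : DifferentiableOn ℂ η Ω) (hψ : DifferentiableOn ℂ ψ Ω)
    (hη0 : ∀ z ∈ Ω, η z ≠ 0)
    (u : ℂ → ℝ)
    (hu : ∀ z ∈ Ω, u z = 2 * Real.log (‖η z‖ ^ 2 * (1 + ‖ψ z‖ ^ 2)))
    (Q : ℂ → ℂ) (hQ : ∀ z ∈ Ω, Q z = -(η z) ^ 2 * deriv ψ z) :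
    (∀ z ∈ Ω, wdz (wdzbar (fun w => (u w : ℂ))) z
        - 2 * (‖Q z‖ : ℂ) ^ 2 * Complex.exp (-(u z : ℂ)) = 0) ∧
    DifferentiableOn ℂ Q Ω := by
  have hψd : DifferentiableOn ℂ (deriv ψ) Ω := ((hψ.analyticOnNhd hΩ).deriv).differentiableOn
  have hηd : DifferentiableOn ℂ (deriv η) Ω := ((hη.analyticOnNhd hΩ).deriv).differentiableOn
  have hrpos : ∀ x ∈ Ω, (0:ℝ) < ‖η x‖ ^ 2 * (1 + ‖ψ x‖ ^ 2) :=
    fun x hx => mul_pos (pow_pos (norm_pos_iff.mpr (hη0 x hx)) 2) (by positivity)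
  have hGval : ∀ x : ℂ, ((‖η x‖ ^ 2 * (1 + ‖ψ x‖ ^ 2) : ℝ) : ℂ)
      = η x * (starRingEnd ℂ) (η x) * (1 + ψ x * (starRingEnd ℂ) (ψ x)) := by
    intro x
    rw [Complex.ofReal_mul, Complex.ofReal_add, Complex.ofReal_one,
      ofReal_sq_abs', ofReal_sq_abs']
  have hgne : ∀ x : ℂ, (1:ℂ) + ψ x * (starRingEnd ℂ) (ψ x) ≠ 0 := by
    intro x
    rw [Complex.mul_conj, show (1:ℂ) + ↑(Complex.normSq (ψ x))
        = ((1 + Complex.normSq (ψ x) : ℝ) : ℂ) by push_cast; ring]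
    exact Complex.ofReal_ne_zero.mpr
      (ne_of_gt (by nlinarith [Complex.normSq_nonneg (ψ x)]))
  -- the value of `∂_z̄ u` on Ω
  have key : ∀ w ∈ Ω, wdzbar (fun x => (u x : ℂ)) w
      = 2 * (starRingEnd ℂ) (deriv η w * (η w)⁻¹)
        + 2 * (ψ w * ((starRingEnd ℂ) (deriv ψ w)
            * ((1:ℂ) + ψ w * (starRingEnd ℂ) (ψ w))⁻¹)) := by
    intro w hw
    have hηw : DifferentiableAt ℂ η w := hη.differentiableAt (hΩ.mem_nhds hw)
    have hψw : DifferentiableAt ℂ ψ w := hψ.differentiableAt (hΩ.mem_nhds hw)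
    have hηwR := hηw.restrictScalars ℝ
    have hψwR := hψw.restrictScalars ℝ
    have hcηR : DifferentiableAt ℝ (fun x => (starRingEnd ℂ) (η x)) w := diffAt_conj hηwR
    have hcψR : DifferentiableAt ℝ (fun x => (starRingEnd ℂ) (ψ x)) w := diffAt_conj hψwR
    have hgR : DifferentiableAt ℝ (fun x => (1:ℂ) + ψ x * (starRingEnd ℂ) (ψ x)) w :=
      (differentiableAt_const _).add (hψwR.mul hcψR)
    have hGR : DifferentiableAt ℝ
        (fun x => η x * (starRingEnd ℂ) (η x) * ((1:ℂ) + ψ x * (starRingEnd ℂ) (ψ x))) w :=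
      (hηwR.mul hcηR).mul hgR
    have hslit : η w * (starRingEnd ℂ) (η w) * ((1:ℂ) + ψ w * (starRingEnd ℂ) (ψ w))
        ∈ Complex.slitPlane := by
      rw [← hGval w]
      exact Complex.ofReal_mem_slitPlane.mpr (hrpos w hw)
    have h1 : (fun x => (u x : ℂ)) =ᶠ[nhds w] fun x =>
        2 * Complex.log (η x * (starRingEnd ℂ) (η x)
          * ((1:ℂ) + ψ x * (starRingEnd ℂ) (ψ x))) := by
      filter_upwards [hΩ.mem_nhds hw] with x hx
      rw [hu x hx, Complex.ofReal_mul, Complex.ofReal_ofNat,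
        Complex.ofReal_log (hrpos x hx).le, hGval x]
    rw [wdzbar_congr h1]
    have hlogd : DifferentiableAt ℝ (fun x => Complex.log (η x * (starRingEnd ℂ) (η x)
        * ((1:ℂ) + ψ x * (starRingEnd ℂ) (ψ x)))) w :=
      DifferentiableAt.comp (g := Complex.log) w ((Complex.differentiableAt_log hslit).restrictScalars ℝ) hGR
    have e0 := wdzbar_comp (φ := Complex.log)
      (f := fun x => η x * (starRingEnd ℂ) (η x) * ((1:ℂ) + ψ x * (starRingEnd ℂ) (ψ x)))
      (Complex.differentiableAt_log hslit) hGR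
    have e1 := wdzbar_mul (f := fun x => η x * (starRingEnd ℂ) (η x))
      (g := fun x => (1:ℂ) + ψ x * (starRingEnd ℂ) (ψ x)) (hηwR.mul hcηR) hgR
    have e2 := wdzbar_mul (f := η) (g := fun x => (starRingEnd ℂ) (η x)) hηwR hcηR
    have e3 := wdzbar_add (f := fun _ => (1:ℂ)) (g := fun x => ψ x * (starRingEnd ℂ) (ψ x))
      (differentiableAt_const _) (hψwR.mul hcψR)
    have e4 := wdzbar_mul (f := ψ) (g := fun x => (starRingEnd ℂ) (ψ x)) hψwR hcψR
    rw [wdzbar_const_mul hlogd, e0, e1, e2, e3, e4, wdzbar_holo hηw, wdzbar_conj_holo hηw,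
      wdzbar_holo hψw, wdzbar_conj_holo hψw, wdzbar_const,
      (Complex.hasDerivAt_log hslit).deriv, map_mul, map_inv₀]
    have hηne := hη0 w hw
    have hcηne : (starRingEnd ℂ) (η w) ≠ 0 := by
      simpa using (map_ne_zero (starRingEnd ℂ)).mpr hηne
    beta_reduce
    have hD : η w * (starRingEnd ℂ) (η w) * (1 + ψ w * (starRingEnd ℂ) (ψ w)) ≠ 0 :=
      mul_ne_zero (mul_ne_zero hηne hcηne) (hgne w)
    field_simp [hgne w]
    ring
  constructor
  · intro z hz
    have hηz : DifferentiableAt ℂ η z := hη.differentiableAt (hΩ.mem_nhds hz)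
    have hψz : DifferentiableAt ℂ ψ z := hψ.differentiableAt (hΩ.mem_nhds hz)
    have hηdz : DifferentiableAt ℂ (deriv η) z := hηd.differentiableAt (hΩ.mem_nhds hz)
    have hψdz : DifferentiableAt ℂ (deriv ψ) z := hψd.differentiableAt (hΩ.mem_nhds hz)
    have hψzR := hψz.restrictScalars ℝ
    have hcψR : DifferentiableAt ℝ (fun x => (starRingEnd ℂ) (ψ x)) z :=
      diffAt_conj hψzR
    have hcψdR : DifferentiableAt ℝ (fun x => (starRingEnd ℂ) (deriv ψ x)) z :=
      diffAt_conj (hψdz.restrictScalars ℝ)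
    have hgR : DifferentiableAt ℝ (fun x => (1:ℂ) + ψ x * (starRingEnd ℂ) (ψ x)) z :=
      (differentiableAt_const _).add (hψzR.mul hcψR)
    have hginvR : DifferentiableAt ℝ (fun x => ((1:ℂ) + ψ x * (starRingEnd ℂ) (ψ x))⁻¹) z :=
      diffAt_inv' hgR (hgne z)
    -- rewrite the outer wdz via `key`
    have h2 : (wdzbar (fun x => (u x : ℂ))) =ᶠ[nhds z] fun w =>
        2 * (starRingEnd ℂ) (deriv η w * (η w)⁻¹)
          + 2 * (ψ w * ((starRingEnd ℂ) (deriv ψ w)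
              * ((1:ℂ) + ψ w * (starRingEnd ℂ) (ψ w))⁻¹)) := by
      filter_upwards [hΩ.mem_nhds hz] with x hx using key x hx
    rw [wdz_congr h2]
    have d1 : DifferentiableAt ℝ
        (fun w => (2:ℂ) * (starRingEnd ℂ) (deriv η w * (η w)⁻¹)) z :=
      (diffAt_conj ((hηdz.mul (hηz.inv (hη0 z hz))).restrictScalars ℝ)).const_mul 2
    have d2 : DifferentiableAt ℝ (fun w => (ψ w * ((starRingEnd ℂ) (deriv ψ w)
        * ((1:ℂ) + ψ w * (starRingEnd ℂ) (ψ w))⁻¹))) z :=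
      hψzR.mul (hcψdR.mul hginvR)
    have f1 := wdz_add
      (f := fun w => (2:ℂ) * (starRingEnd ℂ) (deriv η w * (η w)⁻¹))
      (g := fun w => (2:ℂ) * (ψ w * ((starRingEnd ℂ) (deriv ψ w)
          * ((1:ℂ) + ψ w * (starRingEnd ℂ) (ψ w))⁻¹))) d1 (d2.const_mul 2)
    have f2 := wdz_const_mul (c := (2:ℂ))
      (f := fun w => (starRingEnd ℂ) (deriv η w * (η w)⁻¹))
      (diffAt_conj ((hηdz.mul (hηz.inv (hη0 z hz))).restrictScalars ℝ))
    have f3 := wdz_conj_holo (f := fun w => deriv η w * (η w)⁻¹)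
      (hηdz.mul (hηz.inv (hη0 z hz)))
    have f4 := wdz_const_mul (c := (2:ℂ))
      (f := fun w => ψ w * ((starRingEnd ℂ) (deriv ψ w)
          * ((1:ℂ) + ψ w * (starRingEnd ℂ) (ψ w))⁻¹)) d2
    have f5 := wdz_mul (f := ψ) (g := fun w => (starRingEnd ℂ) (deriv ψ w)
        * ((1:ℂ) + ψ w * (starRingEnd ℂ) (ψ w))⁻¹) hψzR (hcψdR.mul hginvR)
    have f6 := wdz_mul (f := fun w => (starRingEnd ℂ) (deriv ψ w))
        (g := fun w => ((1:ℂ) + ψ w * (starRingEnd ℂ) (ψ w))⁻¹) hcψdR hginvR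
    have f7 := wdz_comp (φ := Inv.inv)
      (f := fun w => (1:ℂ) + ψ w * (starRingEnd ℂ) (ψ w))
      (differentiableAt_inv (hgne z)) hgR
    have f8 := wdz_add (f := fun _ => (1:ℂ))
      (g := fun w => ψ w * (starRingEnd ℂ) (ψ w))
      (differentiableAt_const _) (hψzR.mul hcψR)
    have f9 := wdz_mul (f := ψ) (g := fun w => (starRingEnd ℂ) (ψ w)) hψzR hcψR
    have hderivinv : deriv (Inv.inv : ℂ → ℂ) ((1:ℂ) + ψ z * (starRingEnd ℂ) (ψ z))
        = -(((1:ℂ) + ψ z * (starRingEnd ℂ) (ψ z)) ^ 2)⁻¹ := deriv_inv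
    rw [f1, f2, f3, f4, f5, f6, f7, f8, f9, hderivinv, wdz_const,
      wdz_holo hψz, wdz_conj_holo hψdz, wdz_conj_holo hψz]
    -- now the right-hand side
    rw [hQ z hz, hu z hz]
    have hexp : Complex.exp (-((2 * Real.log (‖η z‖ ^ 2
          * (1 + ‖ψ z‖ ^ 2)) : ℝ) : ℂ))
        = (((‖η z‖ ^ 2 * (1 + ‖ψ z‖ ^ 2)) ^ 2 : ℝ) : ℂ)⁻¹ := by
      rw [← Complex.ofReal_neg, ← Complex.ofReal_exp]
      norm_cast
      rw [show -(2 * Real.log (‖η z‖ ^ 2 * (1 + ‖ψ z‖ ^ 2)))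
            = Real.log (((‖η z‖ ^ 2 * (1 + ‖ψ z‖ ^ 2)) ^ 2)⁻¹) by
          rw [Real.log_inv, Real.log_pow]; push_cast; ring,
        Real.exp_log (inv_pos.mpr (pow_pos (hrpos z hz) 2))]
    rw [hexp]
    have habsQ : ((‖-(η z) ^ 2 * deriv ψ z‖ : ℝ) : ℂ) ^ 2
        = (-(η z) ^ 2 * deriv ψ z) * (starRingEnd ℂ) (-(η z) ^ 2 * deriv ψ z) := by
      rw [← Complex.ofReal_pow, ofReal_sq_abs']
    rw [habsQ, Complex.ofReal_pow, hGval z]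
    have hηne := hη0 z hz
    have hcηne : (starRingEnd ℂ) (η z) ≠ 0 := by
      simpa using (map_ne_zero (starRingEnd ℂ)).mpr hηne
    have hgz := hgne z
    simp only [map_mul, map_neg, map_pow]
    field_simp
    ring
  · exact (((hη.pow 2).neg.mul hψd)).congr hQ
end
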